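/- Let d ≥ 1, a > 0, L > 0, R ≥ 1. Let K ⊆ ℝ^d be closed and convex with B(0,1) ⊆ K ⊆ B(0,R) (Euclidean balls), and let f : ℝ^d → ℝ be convex on K and L-Lipschitz on K. Let Q = {(x,t) ∈ ℝ^d × ℝ : x ∈ K, f(x) ≤ a t}, and for r ≥ 0 let Q_r = {w ∈ ℝ^{d+1} : dist(w, Q) ≤ r}. Then for every r ≥ 0, ∫_{Q_r} e^{-a t} dx dt ≤ e^{r·C_L} · ∫_{Q} e^{-a t} dx dt, where C_L = √(a² + L²) + L R + d. -/

import Mathlib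

open MeasureTheory

/-- The Euclidean norm of a point of `ℝ^d × ℝ ≅ ℝ^{d+1}`. -/
noncomputable def enorm2 {d : ℕ} (p : EuclideanSpace ℝ (Fin d) × ℝ) : ℝ :=
  Real.sqrt (‖p.1‖ ^ 2 + p.2 ^ 2)

/-- The Euclidean distance from a point of `ℝ^{d+1}` to a set. -/
noncomputable def edist2 {d : ℕ} (w : EuclideanSpace ℝ (Fin d) × ℝ)
    (Q : Set (EuclideanSpace ℝ (Fin d) × ℝ)) : ℝ :=
  sInf ((fun q => enorm2 (w - q)) '' Q)

open Real Set Metric Filter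
open scoped ENNReal Pointwise RealInnerProductSpace Topology

section aux

variable {F : Type*} [NormedAddCommGroup F] [InnerProductSpace ℝ F]

/-- Any point satisfying the obtuse-angle condition is closer to the points of the set. -/
lemma aux_proj_dist_le (u y pu : F) (h1 : ⟪u - pu, y - pu⟫ ≤ 0) : ‖pu - y‖ ≤ ‖u - y‖ := by
  have e : u - y = (u - pu) + (pu - y) := by abel
  have h2 : ‖u - y‖ ^ 2 = ‖u - pu‖ ^ 2 + 2 * ⟪u - pu, pu - y⟫ + ‖pu - y‖ ^ 2 := by
    rw [e, norm_add_sq_real]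
  have h3 : ⟪u - pu, pu - y⟫ = -⟪u - pu, y - pu⟫ := by
    rw [← inner_neg_right]; congr 1; abel
  have h4 : ‖pu - y‖ ^ 2 ≤ ‖u - y‖ ^ 2 := by nlinarith [sq_nonneg ‖u - pu‖]
  calc ‖pu - y‖ = Real.sqrt (‖pu - y‖ ^ 2) := (Real.sqrt_sq (norm_nonneg _)).symm
    _ ≤ Real.sqrt (‖u - y‖ ^ 2) := Real.sqrt_le_sqrt h4
    _ = ‖u - y‖ := Real.sqrt_sq (norm_nonneg _)

/-- The metric projection onto a convex set is 1-Lipschitz (from the obtuse-angle conditions). -/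
lemma aux_proj_lip (u v pu pv : F) (h1 : ⟪u - pu, pv - pu⟫ ≤ 0)
    (h2 : ⟪v - pv, pu - pv⟫ ≤ 0) : ‖pu - pv‖ ≤ ‖u - v‖ := by
  have key : ‖pu - pv‖ ^ 2 ≤ ⟪u - v, pu - pv⟫ := by
    have e1 : ⟪u - v, pu - pv⟫
        = ⟪u - pu, pu - pv⟫ + ⟪pu - pv, pu - pv⟫ + ⟪pv - v, pu - pv⟫ := by
      rw [← inner_add_left, ← inner_add_left]; congr 1; abel
    have e2 : ⟪u - pu, pu - pv⟫ = -⟪u - pu, pv - pu⟫ := by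
      rw [← inner_neg_right]; congr 1; abel
    have e3 : ⟪pv - v, pu - pv⟫ = -⟪v - pv, pu - pv⟫ := by
      rw [← inner_neg_left]; congr 1; abel
    have e4 : ⟪pu - pv, pu - pv⟫ = ‖pu - pv‖ ^ 2 := real_inner_self_eq_norm_sq _
    nlinarith
  rcases eq_or_lt_of_le (norm_nonneg (pu - pv)) with h | h
  · rw [← h]; exact norm_nonneg _
  · have h5 := real_inner_le_norm (u - v) (pu - pv)
    nlinarith

end aux

/-- Cauchy–Schwarz in the plane. -/
lemma aux_cauchy2 (a L u v : ℝ) (ha : 0 ≤ a) (hL : 0 ≤ L) (hu : 0 ≤ u) (hv : 0 ≤ v) :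
    a * u + L * v ≤ Real.sqrt (a ^ 2 + L ^ 2) * Real.sqrt (u ^ 2 + v ^ 2) := by
  rw [← Real.sqrt_mul (by positivity)]
  have h : (a * u + L * v) ^ 2 ≤ (a ^ 2 + L ^ 2) * (u ^ 2 + v ^ 2) := by nlinarith [sq_nonneg (a * v - L * u)]
  calc a * u + L * v = Real.sqrt ((a * u + L * v) ^ 2) := (Real.sqrt_sq (by positivity)).symm
    _ ≤ Real.sqrt ((a ^ 2 + L ^ 2) * (u ^ 2 + v ^ 2)) := Real.sqrt_le_sqrt h

lemma aux_enorm2_fst_le {d : ℕ} (p : EuclideanSpace ℝ (Fin d) × ℝ) : ‖p.1‖ ≤ enorm2 p := by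
  rw [enorm2]
  calc ‖p.1‖ = Real.sqrt (‖p.1‖ ^ 2) := (Real.sqrt_sq (norm_nonneg _)).symm
    _ ≤ _ := Real.sqrt_le_sqrt (by nlinarith [sq_nonneg p.2])

/-- One-dimensional exponential integral. -/
lemma aux_oneD (a c : ℝ) (ha : 0 < a) :
    ∫⁻ t : ℝ in {t : ℝ | c ≤ a * t}, ENNReal.ofReal (Real.exp (-a * t))
      = ENNReal.ofReal (Real.exp (-c) / a) := by
  have hset : {t : ℝ | c ≤ a * t} = Set.Ici (c / a) := by
    ext t
    simp only [Set.mem_setOf_eq, Set.mem_Ici, div_le_iff₀ ha]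
    constructor <;> intro h <;> linarith [h]
  rw [hset, ← restrict_Ioi_eq_restrict_Ici,
    ← ofReal_integral_eq_lintegral_ofReal (exp_neg_integrableOn_Ioi _ ha)
      (ae_of_all _ fun t => (Real.exp_pos _).le)]
  congr 1
  have hderiv : ∀ x ∈ Set.Ici (c / a), HasDerivAt (fun t : ℝ => -Real.exp (-a * t) / a)
      (Real.exp (-a * x)) x := by
    intro x _
    have h1 : HasDerivAt (fun t : ℝ => -a * t) (-a) x := by
      simpa using (hasDerivAt_id x).const_mul (-a)
    have h2 : HasDerivAt (fun t : ℝ => -Real.exp (-a * t) / a) (-(Real.exp (-a * x) * -a) / a) x :=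
      (h1.exp.neg).div_const a
    convert h2 using 1
    field_simp
  have htend : Filter.Tendsto (fun t : ℝ => -Real.exp (-a * t) / a) atTop (𝓝 0) := by
    have h1 : Filter.Tendsto (fun t : ℝ => -a * t) atTop atBot :=
      Filter.tendsto_id.const_mul_atTop_of_neg (neg_neg_iff_pos.2 ha)
    have h2 : Filter.Tendsto (fun t : ℝ => Real.exp (-a * t)) atTop (𝓝 0) :=
      Real.tendsto_exp_atBot.comp h1
    simpa using (h2.neg).div_const a
  rw [integral_Ioi_of_hasDerivAt_of_tendsto' hderiv (exp_neg_integrableOn_Ioi _ ha) htend]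
  rw [show -a * (c / a) = -c by field_simp]
  ring

/-- Change of variables by scaling for lower integrals on Euclidean space. -/
lemma aux_lint_comp_smul {d : ℕ} (G : EuclideanSpace ℝ (Fin d) → ℝ≥0∞) {c : ℝ} (hc : 0 < c) :
    ∫⁻ x, G x = ENNReal.ofReal (c ^ d) * ∫⁻ y, G (c • y) := by
  have hcu : IsUnit c := isUnit_iff_ne_zero.2 hc.ne'
  have hfun : (⇑(Homeomorph.smul hcu.unit (α := EuclideanSpace ℝ (Fin d))))
      = fun y : EuclideanSpace ℝ (Fin d) => c • y := by
    funext y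
    simp [Homeomorph.smul, Units.smul_def]
  have h1 := lintegral_map_equiv G (Homeomorph.smul hcu.unit
    (α := EuclideanSpace ℝ (Fin d))).toMeasurableEquiv (μ := volume)
  rw [Homeomorph.toMeasurableEquiv_coe] at h1
  simp only [hfun] at h1
  rw [← h1, Measure.map_addHaar_smul volume hc.ne', lintegral_smul_measure,
    finrank_euclideanSpace_fin]
  have habs : |((c : ℝ) ^ d)⁻¹| = (c ^ d)⁻¹ := abs_of_pos (by positivity)
  rw [habs, ENNReal.ofReal_inv_of_pos (by positivity), smul_eq_mul, ← mul_assoc,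
    ENNReal.mul_inv_cancel (by simp [ENNReal.ofReal_pos]; positivity) ENNReal.ofReal_ne_top,
    one_mul]

/-- Fubini step: integrating `e^{-at}` over `{(x,t) : x ∈ S, φ x ≤ a t}`. -/
lemma aux_stepA {d : ℕ} (a : ℝ) (ha : 0 < a) (S : Set (EuclideanSpace ℝ (Fin d)))
    (hS : MeasurableSet S) (φ : EuclideanSpace ℝ (Fin d) → ℝ) (hφ : Measurable φ) :
    ∫⁻ w : EuclideanSpace ℝ (Fin d) × ℝ in {w | w.1 ∈ S ∧ φ w.1 ≤ a * w.2},
        ENNReal.ofReal (Real.exp (-a * w.2))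
      = ENNReal.ofReal a⁻¹ * ∫⁻ x in S, ENNReal.ofReal (Real.exp (-φ x)) := by
  have hsetm : MeasurableSet {w : EuclideanSpace ℝ (Fin d) × ℝ | w.1 ∈ S ∧ φ w.1 ≤ a * w.2} := by
    have he : {w : EuclideanSpace ℝ (Fin d) × ℝ | w.1 ∈ S ∧ φ w.1 ≤ a * w.2}
        = (Prod.fst ⁻¹' S) ∩ {w : EuclideanSpace ℝ (Fin d) × ℝ | φ w.1 ≤ a * w.2} := rfl
    rw [he]
    exact (measurable_fst hS).inter
      (measurableSet_le (hφ.comp measurable_fst) (measurable_snd.const_mul a))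
  rw [← lintegral_indicator hsetm, Measure.volume_eq_prod, lintegral_prod]
  · have hinner : ∀ x : EuclideanSpace ℝ (Fin d),
        (∫⁻ t, ({w : EuclideanSpace ℝ (Fin d) × ℝ | w.1 ∈ S ∧ φ w.1 ≤ a * w.2}).indicator
            (fun w => ENNReal.ofReal (Real.exp (-a * w.2))) (x, t))
          = S.indicator (fun x => ENNReal.ofReal (Real.exp (-φ x) / a)) x := by
      intro x
      by_cases hx : x ∈ S
      · have hpt : ∀ t : ℝ,
            ({w : EuclideanSpace ℝ (Fin d) × ℝ | w.1 ∈ S ∧ φ w.1 ≤ a * w.2}).indicator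
              (fun w => ENNReal.ofReal (Real.exp (-a * w.2))) (x, t)
            = ({t : ℝ | φ x ≤ a * t}).indicator
                (fun t => ENNReal.ofReal (Real.exp (-a * t))) t := by
          intro t
          by_cases ht : φ x ≤ a * t <;> simp [Set.indicator_apply, hx, ht]
        have hmt : MeasurableSet {t : ℝ | φ x ≤ a * t} :=
          measurableSet_le measurable_const (by fun_prop)
        rw [lintegral_congr hpt, lintegral_indicator hmt,
          aux_oneD a (φ x) ha, Set.indicator_of_mem hx]
      · have hpt : ∀ t : ℝ,
            ({w : EuclideanSpace ℝ (Fin d) × ℝ | w.1 ∈ S ∧ φ w.1 ≤ a * w.2}).indicator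
              (fun w => ENNReal.ofReal (Real.exp (-a * w.2))) (x, t) = 0 := by
          intro t; simp [Set.indicator_apply, hx]
        rw [lintegral_congr hpt, lintegral_zero, Set.indicator_of_notMem hx]
    rw [lintegral_congr hinner, lintegral_indicator hS,
      ← lintegral_const_mul' _ _ ENNReal.ofReal_ne_top]
    exact lintegral_congr fun x => by
      rw [← ENNReal.ofReal_mul (by positivity), div_eq_mul_inv, mul_comm]
  · exact (Measurable.indicator
      ((measurable_snd.const_mul (-a)).exp.ennreal_ofReal) hsetm).aemeasurable

/-- Envelope estimate: for `Q = {(x,t) : x ∈ K, f x ≤ a t}` with `B(0,1) ⊆ K ⊆ B(0,R)` and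
`f` convex and `L`-Lipschitz on `K`, the parallel sets `Q_r` satisfy
`∫_{Q_r} e^{-at} ≤ e^{r C_L} ∫_Q e^{-at}` with `C_L = √(a² + L²) + L R + d`. -/
theorem stmt_14 {d : ℕ} (hd : 1 ≤ d) (a L R : ℝ) (ha : 0 < a) (hL : 0 < L) (hR : 1 ≤ R)
    (K : Set (EuclideanSpace ℝ (Fin d))) (hKcl : IsClosed K) (hKconv : Convex ℝ K)
    (hK1 : Metric.closedBall (0 : EuclideanSpace ℝ (Fin d)) 1 ⊆ K)
    (hKR : K ⊆ Metric.closedBall (0 : EuclideanSpace ℝ (Fin d)) R)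
    (f : EuclideanSpace ℝ (Fin d) → ℝ) (hfc : ConvexOn ℝ K f)
    (hfL : ∀ u ∈ K, ∀ v ∈ K, |f u - f v| ≤ L * ‖u - v‖)
    (r : ℝ) (hr : 0 ≤ r) :
    ∫⁻ w in {w : EuclideanSpace ℝ (Fin d) × ℝ |
        edist2 w {q : EuclideanSpace ℝ (Fin d) × ℝ | q.1 ∈ K ∧ f q.1 ≤ a * q.2} ≤ r},
      ENNReal.ofReal (Real.exp (-a * w.2))
    ≤ ENNReal.ofReal (Real.exp (r * (Real.sqrt (a ^ 2 + L ^ 2) + L * R + d)))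
      * ∫⁻ w in {w : EuclideanSpace ℝ (Fin d) × ℝ | w.1 ∈ K ∧ f w.1 ≤ a * w.2},
          ENNReal.ofReal (Real.exp (-a * w.2)) := by
  classical
  have hKne : K.Nonempty := ⟨0, hK1 (Metric.mem_closedBall_self zero_le_one)⟩
  -- the metric projection onto K
  choose proj hprojK hprojd using
    exists_norm_eq_iInf_of_complete_convex hKne hKcl.isComplete hKconv
  have obtuse : ∀ u, ∀ w ∈ K, ⟪u - proj u, w - proj u⟫ ≤ 0 := fun u =>
    (norm_eq_iInf_iff_real_inner_le_zero hKconv (hprojK u)).1 (hprojd u)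
  have projK_dist : ∀ u, ∀ y ∈ K, ‖proj u - y‖ ≤ ‖u - y‖ := fun u y hy =>
    aux_proj_dist_le u y (proj u) (obtuse u y hy)
  have proj_lipschitz : ∀ u v, ‖proj u - proj v‖ ≤ ‖u - v‖ := fun u v =>
    aux_proj_lip u v (proj u) (proj v) (obtuse u (proj v) (hprojK v))
      (obtuse v (proj u) (hprojK u))
  have proj_fix : ∀ y ∈ K, proj y = y := by
    intro y hy
    have h := projK_dist y y hy
    simp only [sub_self, norm_zero] at h
    have h0 : ‖proj y - y‖ = 0 := le_antisymm h (norm_nonneg _)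
    exact sub_eq_zero.1 (norm_eq_zero.1 h0)
  set g : EuclideanSpace ℝ (Fin d) → ℝ := fun x => f (proj x) with hgdef
  have hgK : ∀ y ∈ K, g y = f y := fun y hy => by
    simp only [hgdef]; rw [proj_fix y hy]
  have hglip : ∀ u v, |g u - g v| ≤ L * ‖u - v‖ := fun u v =>
    (hfL _ (hprojK u) _ (hprojK v)).trans
      (mul_le_mul_of_nonneg_left (proj_lipschitz u v) hL.le)
  have hgmeas : Measurable g := by
    have hlip : LipschitzWith L.toNNReal g := by
      apply LipschitzWith.of_dist_le_mul
      intro u v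
      rw [Real.coe_toNNReal L hL.le, Real.dist_eq, dist_eq_norm]
      exact hglip u v
    exact hlip.continuous.measurable
  set σ : ℝ := Real.sqrt (a ^ 2 + L ^ 2) with hσdef
  have hσ : 0 < σ := Real.sqrt_pos.2 (by positivity)
  set T : Set (EuclideanSpace ℝ (Fin d)) := {x | Metric.infDist x K ≤ r} with hTdef
  have hTmeas : MeasurableSet T :=
    measurableSet_le (Metric.continuous_infDist_pt K).measurable measurable_const
  set Q : Set (EuclideanSpace ℝ (Fin d) × ℝ) := {q | q.1 ∈ K ∧ f q.1 ≤ a * q.2} with hQdef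
  have hQne : Q.Nonempty := by
    refine ⟨(0, |f 0| / a), hK1 (Metric.mem_closedBall_self zero_le_one), ?_⟩
    rw [mul_div_cancel₀ _ ha.ne']
    exact le_abs_self _
  -- approximation from the infimum
  have happrox : ∀ w : EuclideanSpace ℝ (Fin d) × ℝ, edist2 w Q ≤ r →
      ∀ ε : ℝ, 0 < ε → ∃ q ∈ Q, enorm2 (w - q) < r + ε := by
    intro w hw ε hε
    have himg : ((fun q => enorm2 (w - q)) '' Q).Nonempty := hQne.image _
    have hbdd : BddBelow ((fun q => enorm2 (w - q)) '' Q) := by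
      refine ⟨0, fun x hx => ?_⟩
      obtain ⟨q, _, rfl⟩ := hx
      exact Real.sqrt_nonneg _
    have hlt : sInf ((fun q => enorm2 (w - q)) '' Q) < r + ε :=
      lt_of_le_of_lt hw (by linarith)
    obtain ⟨b, hb, hblt⟩ := (csInf_lt_iff hbdd himg).1 hlt
    obtain ⟨q, hq, rfl⟩ := hb
    exact ⟨q, hq, hblt⟩
  -- Step B: inclusion into the envelope set
  have hsub : {w : EuclideanSpace ℝ (Fin d) × ℝ | edist2 w Q ≤ r}
      ⊆ {w : EuclideanSpace ℝ (Fin d) × ℝ | w.1 ∈ T ∧ (g w.1 - r * σ) ≤ a * w.2} := by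
    intro w hw
    have hw' : edist2 w Q ≤ r := hw
    constructor
    · -- infDist w.1 K ≤ r
      show Metric.infDist w.1 K ≤ r
      by_contra hcon
      push_neg at hcon
      obtain ⟨q, hqQ, hlt⟩ := happrox w hw' (Metric.infDist w.1 K - r) (by linarith)
      have h1 : Metric.infDist w.1 K ≤ ‖w.1 - q.1‖ := by
        rw [← dist_eq_norm]
        exact Metric.infDist_le_dist_of_mem hqQ.1
      have h2 : ‖w.1 - q.1‖ = ‖(w - q).1‖ := by simp
      have h3 : ‖(w - q).1‖ ≤ enorm2 (w - q) := aux_enorm2_fst_le _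
      linarith [h1, h2 ▸ h1, h3, hlt]
    · -- envelope inequality
      by_contra hcon
      push_neg at hcon
      set ε : ℝ := (g w.1 - r * σ - a * w.2) / σ with hεdef
      have hεpos : 0 < ε := div_pos (by linarith) hσ
      obtain ⟨q, ⟨hq1, hq2⟩, hlt⟩ := happrox w hw' ε hεpos
      have hA : g w.1 ≤ f q.1 + L * ‖w.1 - q.1‖ := by
        have h1 : |f (proj w.1) - f q.1| ≤ L * ‖proj w.1 - q.1‖ := hfL _ (hprojK _) _ hq1
        have h2 : ‖proj w.1 - q.1‖ ≤ ‖w.1 - q.1‖ := projK_dist _ _ hq1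
        have h3 := (abs_le.1 h1).2
        have h4 : L * ‖proj w.1 - q.1‖ ≤ L * ‖w.1 - q.1‖ :=
          mul_le_mul_of_nonneg_left h2 hL.le
        simp only [hgdef]
        linarith
      have hB : a * q.2 ≤ a * w.2 + a * |w.2 - q.2| := by
        have h5 : q.2 - w.2 ≤ |w.2 - q.2| := by
          rw [abs_sub_comm]; exact le_abs_self _
        nlinarith [ha.le]
      have hcs : a * |w.2 - q.2| + L * ‖w.1 - q.1‖ ≤ σ * enorm2 (w - q) := by
        have h6 := aux_cauchy2 a L |w.2 - q.2| ‖w.1 - q.1‖ ha.le hL.le (abs_nonneg _)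
          (norm_nonneg _)
        have h7 : enorm2 (w - q) = Real.sqrt (‖w.1 - q.1‖ ^ 2 + (w.2 - q.2) ^ 2) := by
          rw [enorm2]; simp
        rw [h7]
        have h8 : Real.sqrt (|w.2 - q.2| ^ 2 + ‖w.1 - q.1‖ ^ 2)
            = Real.sqrt (‖w.1 - q.1‖ ^ 2 + (w.2 - q.2) ^ 2) := by
          rw [sq_abs, add_comm]
        rw [← h8]
        exact h6
      have h9 : σ * enorm2 (w - q) < σ * (r + ε) :=
        mul_lt_mul_of_pos_left hlt hσ
      have h10 : σ * (r + ε) = σ * r + (g w.1 - r * σ - a * w.2) := by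
        rw [hεdef]; field_simp
      linarith
  set J : ℝ≥0∞ := ∫⁻ y in K, ENNReal.ofReal (Real.exp (-g y)) with hJdef
  -- inclusion T ⊆ (1+r) • K
  have hc1r : (0 : ℝ) < 1 + r := by linarith
  have hTsub : T ⊆ (1 + r) • K := by
    intro x hx
    obtain ⟨y, hyK, hyd⟩ := hKcl.exists_infDist_eq_dist hKne x
    have hxy : ‖x - y‖ ≤ r := by
      rw [← dist_eq_norm, ← hyd]; exact hx
    rcases eq_or_lt_of_le hr with hr0 | hr0
    · have hxy0 : ‖x - y‖ ≤ 0 := by rw [← hr0] at hxy; exact hxy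
      have : x = y := by
        have := le_antisymm hxy0 (norm_nonneg _)
        exact sub_eq_zero.1 (norm_eq_zero.1 this)
      refine Set.mem_smul_set.2 ⟨x, this ▸ hyK, ?_⟩
      rw [← hr0, add_zero, one_smul]
    · have hz : r⁻¹ • (x - y) ∈ K := by
        apply hK1
        rw [Metric.mem_closedBall, dist_zero_right, norm_smul, Real.norm_eq_abs,
          abs_of_pos (inv_pos.2 hr0), inv_mul_le_iff₀ hr0, mul_one]
        exact hxy
      have hmem := hKconv hyK hz (a := 1 / (1 + r)) (b := r / (1 + r))
        (by positivity) (by positivity) (by field_simp)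
      refine Set.mem_smul_set.2 ⟨(1 / (1 + r)) • y + (r / (1 + r)) • (r⁻¹ • (x - y)), hmem, ?_⟩
      rw [smul_smul, smul_add, smul_smul, smul_smul]
      have e1 : (1 + r) * (1 / (1 + r)) = 1 := by field_simp
      have e2 : (1 + r) * (r / (1 + r) * r⁻¹) = 1 := by field_simp
      rw [e1, e2, one_smul, one_smul]
      abel
  -- measurability of the scaled set
  have hcKcl : IsClosed ((1 + r) • K) := by
    have hcu : IsUnit (1 + r) := isUnit_iff_ne_zero.2 hc1r.ne'
    have : (1 + r) • K = (Homeomorph.smul hcu.unit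
        (α := EuclideanSpace ℝ (Fin d))) '' K := by
      ext z
      simp only [Set.mem_smul_set, Homeomorph.smul, Homeomorph.homeomorph_mk_coe,
        Equiv.coe_fn_mk, Set.mem_image]
      constructor
      · rintro ⟨y, hy, rfl⟩; exact ⟨y, hy, by simp [Units.smul_def]⟩
      · rintro ⟨y, hy, rfl⟩; exact ⟨y, hy, by simp [Units.smul_def]⟩
    rw [this]
    exact (Homeomorph.isClosed_image _).2 hKcl
  -- lower bound for g on the scaled set
  have hgy : ∀ y ∈ K, g y - L * r * R ≤ g ((1 + r) • y) := by
    intro y hy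
    have h1 : |f (proj ((1 + r) • y)) - f y| ≤ L * ‖proj ((1 + r) • y) - y‖ :=
      hfL _ (hprojK _) _ hy
    have h2 : ‖proj ((1 + r) • y) - y‖ ≤ ‖(1 + r) • y - y‖ := projK_dist _ _ hy
    have h3 : ‖(1 + r) • y - y‖ = r * ‖y‖ := by
      have e : (1 + r) • y - y = r • y := by
        rw [add_smul, one_smul]; abel
      rw [e, norm_smul, Real.norm_eq_abs, abs_of_nonneg hr]
    have h4 : ‖y‖ ≤ R := by
      have := hKR hy
      rwa [Metric.mem_closedBall, dist_zero_right] at this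
    have h5 : ‖proj ((1 + r) • y) - y‖ ≤ r * R := by
      rw [h3] at h2
      exact h2.trans (mul_le_mul_of_nonneg_left h4 hr)
    have h6 : L * ‖proj ((1 + r) • y) - y‖ ≤ L * (r * R) :=
      mul_le_mul_of_nonneg_left h5 hL.le
    have h7 := (abs_le.1 h1).1
    have h8 : g y = f y := hgK y hy
    simp only [hgdef] at *
    linarith
  -- scaling estimate
  have hscale : ∫⁻ x in (1 + r) • K, ENNReal.ofReal (Real.exp (-g x))
      ≤ ENNReal.ofReal ((1 + r) ^ d)
        * (ENNReal.ofReal (Real.exp (L * r * R)) * J) := by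
    rw [← lintegral_indicator hcKcl.measurableSet]
    rw [aux_lint_comp_smul (((1 + r) • K).indicator fun x => ENNReal.ofReal (Real.exp (-g x)))
      hc1r]
    have hind : ∀ y : EuclideanSpace ℝ (Fin d),
        ((1 + r) • K).indicator (fun x => ENNReal.ofReal (Real.exp (-g x))) ((1 + r) • y)
          = K.indicator (fun y => ENNReal.ofReal (Real.exp (-g ((1 + r) • y)))) y := by
      intro y
      by_cases hy : y ∈ K
      · rw [Set.indicator_of_mem ((smul_mem_smul_set_iff₀ hc1r.ne' K y).2 hy),
          Set.indicator_of_mem hy]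
      · rw [Set.indicator_of_notMem (fun h => hy ((smul_mem_smul_set_iff₀ hc1r.ne' K y).1 h)),
          Set.indicator_of_notMem hy]
    rw [lintegral_congr hind, lintegral_indicator hKcl.measurableSet]
    apply mul_le_mul_of_nonneg_left ?_ zero_le
    rw [← lintegral_const_mul' _ _ ENNReal.ofReal_ne_top]
    apply setLIntegral_mono (hgmeas.neg.exp.ennreal_ofReal.const_mul _)
    intro y hy
    rw [← ENNReal.ofReal_mul (Real.exp_pos _).le, ← Real.exp_add]
    apply ENNReal.ofReal_le_ofReal
    apply Real.exp_le_exp.2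
    linarith [hgy y hy, show (-g) y = -g y from rfl]
  -- rewriting the right-hand side
  have hQset : {w : EuclideanSpace ℝ (Fin d) × ℝ | w.1 ∈ K ∧ f w.1 ≤ a * w.2}
      = {w : EuclideanSpace ℝ (Fin d) × ℝ | w.1 ∈ K ∧ g w.1 ≤ a * w.2} := by
    ext w
    simp only [Set.mem_setOf_eq]
    constructor
    · rintro ⟨h1, h2⟩; exact ⟨h1, by rw [hgK _ h1]; exact h2⟩
    · rintro ⟨h1, h2⟩; exact ⟨h1, by rw [← hgK _ h1]; exact h2⟩
  have hRHS : ∫⁻ w in {w : EuclideanSpace ℝ (Fin d) × ℝ | w.1 ∈ K ∧ f w.1 ≤ a * w.2},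
      ENNReal.ofReal (Real.exp (-a * w.2)) = ENNReal.ofReal a⁻¹ * J := by
    rw [hQset, aux_stepA a ha K hKcl.measurableSet g hgmeas]
  -- the main chain
  have hmain : ∫⁻ w in {w : EuclideanSpace ℝ (Fin d) × ℝ | edist2 w Q ≤ r},
      ENNReal.ofReal (Real.exp (-a * w.2))
      ≤ ENNReal.ofReal a⁻¹ * (ENNReal.ofReal (Real.exp (r * σ))
          * (ENNReal.ofReal ((1 + r) ^ d) * (ENNReal.ofReal (Real.exp (L * r * R)) * J))) := by
    calc ∫⁻ w in {w : EuclideanSpace ℝ (Fin d) × ℝ | edist2 w Q ≤ r},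
        ENNReal.ofReal (Real.exp (-a * w.2))
        ≤ ∫⁻ w in {w : EuclideanSpace ℝ (Fin d) × ℝ | w.1 ∈ T ∧ (g w.1 - r * σ) ≤ a * w.2},
            ENNReal.ofReal (Real.exp (-a * w.2)) := lintegral_mono_set hsub
      _ = ENNReal.ofReal a⁻¹
          * ∫⁻ x in T, ENNReal.ofReal (Real.exp (-(g x - r * σ))) := by
          exact aux_stepA a ha T hTmeas (fun x => g x - r * σ) (hgmeas.sub measurable_const)
      _ = ENNReal.ofReal a⁻¹ * (ENNReal.ofReal (Real.exp (r * σ))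
            * ∫⁻ x in T, ENNReal.ofReal (Real.exp (-g x))) := by
          congr 1
          rw [← lintegral_const_mul' _ _ ENNReal.ofReal_ne_top]
          exact lintegral_congr fun x => by
            rw [← ENNReal.ofReal_mul (Real.exp_pos _).le, ← Real.exp_add]
            congr 2
            ring
      _ ≤ ENNReal.ofReal a⁻¹ * (ENNReal.ofReal (Real.exp (r * σ))
            * ∫⁻ x in (1 + r) • K, ENNReal.ofReal (Real.exp (-g x))) := by
          gcongr
      _ ≤ ENNReal.ofReal a⁻¹ * (ENNReal.ofReal (Real.exp (r * σ))
            * (ENNReal.ofReal ((1 + r) ^ d)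
              * (ENNReal.ofReal (Real.exp (L * r * R)) * J))) := by
          gcongr
  -- final constant comparison
  have hconst : ENNReal.ofReal a⁻¹ * (ENNReal.ofReal (Real.exp (r * σ))
        * (ENNReal.ofReal ((1 + r) ^ d) * (ENNReal.ofReal (Real.exp (L * r * R)) * J)))
      ≤ ENNReal.ofReal (Real.exp (r * (σ + L * R + d))) * (ENNReal.ofReal a⁻¹ * J) := by
    have hpow : (1 + r) ^ d ≤ Real.exp (r * d) := by
      have h1 : 1 + r ≤ Real.exp r := by
        have := Real.add_one_le_exp r
        linarith
      calc (1 + r) ^ d ≤ (Real.exp r) ^ d := by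
            apply pow_le_pow_left₀ (by linarith) h1
        _ = Real.exp (r * d) := by
            rw [← Real.exp_nat_mul, mul_comm]
    have hreal : a⁻¹ * (Real.exp (r * σ) * ((1 + r) ^ d * Real.exp (L * r * R)))
        ≤ Real.exp (r * (σ + L * R + d)) * a⁻¹ := by
      have h2 : Real.exp (r * σ) * ((1 + r) ^ d * Real.exp (L * r * R))
          ≤ Real.exp (r * σ) * (Real.exp (r * d) * Real.exp (L * r * R)) := by
        have := mul_le_mul_of_nonneg_right hpow (Real.exp_pos (L * r * R)).le
        exact mul_le_mul_of_nonneg_left this (Real.exp_pos _).le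
      have h3 : Real.exp (r * σ) * (Real.exp (r * d) * Real.exp (L * r * R))
          = Real.exp (r * (σ + L * R + d)) := by
        rw [← Real.exp_add, ← Real.exp_add]
        congr 1
        ring
      rw [mul_comm (a⁻¹)]
      apply mul_le_mul_of_nonneg_right _ (by positivity)
      rw [← h3]
      exact h2
    calc ENNReal.ofReal a⁻¹ * (ENNReal.ofReal (Real.exp (r * σ))
          * (ENNReal.ofReal ((1 + r) ^ d) * (ENNReal.ofReal (Real.exp (L * r * R)) * J)))
        = ENNReal.ofReal (a⁻¹ * (Real.exp (r * σ) * ((1 + r) ^ d * Real.exp (L * r * R)))) * J := by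
          rw [ENNReal.ofReal_mul (by positivity), ENNReal.ofReal_mul (Real.exp_pos _).le,
            ENNReal.ofReal_mul (by positivity)]
          ring
      _ ≤ ENNReal.ofReal (Real.exp (r * (σ + L * R + d)) * a⁻¹) * J := by
          exact mul_le_mul_left (ENNReal.ofReal_le_ofReal hreal) J
      _ = ENNReal.ofReal (Real.exp (r * (σ + L * R + d))) * (ENNReal.ofReal a⁻¹ * J) := by
          rw [ENNReal.ofReal_mul (Real.exp_pos _).le, mul_assoc]
  rw [hRHS]
  exact hmain.trans hconst
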